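/- Let T be quasimonotone and write Ť = cone(T) ∪ (X × {0}). Then the following are equivalent: (i) T is AE-maximal quasimonotone; (ii) every quasimonotone S with Ť ⊆ Š satisfies Ť = Š; (iii) Ť is maximal quasimonotone; (iv) Ť = T^ν. -/

import Mathlib

open NormedSpace

variable {X : Type*} [NormedAddCommGroup X] [NormedSpace ℝ X]

/-- quasimonotone relation: (x,x*) ∼q (y,y*) iff min{⟨y−x,x*⟩, ⟨x−y,y*⟩} ≤ 0 -/
def qrel (p q : X × StrongDual ℝ X) : Prop :=
  min (p.2 (q.1 - p.1)) (q.2 (p.1 - q.1)) ≤ 0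

/-- quasimonotone polar -/
def qpolar (T : Set (X × StrongDual ℝ X)) : Set (X × StrongDual ℝ X) :=
  {p | ∀ q ∈ T, qrel p q}

/-- imagewise conic hull of an operator -/
def coneOp (T : Set (X × StrongDual ℝ X)) : Set (X × StrongDual ℝ X) :=
  {p | ∃ t : ℝ, 0 ≤ t ∧ ∃ v, (p.1, v) ∈ T ∧ p.2 = t • v}

def QuasiMono (T : Set (X × StrongDual ℝ X)) : Prop := ∀ p ∈ T, ∀ q ∈ T, qrel p q

def MaxQuasiMono (T : Set (X × StrongDual ℝ X)) : Prop :=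
  QuasiMono T ∧ ∀ S, QuasiMono S → T ⊆ S → S = T

def Vset (T : Set (X × StrongDual ℝ X)) (x : X) : Set X :=
  {y | ∃ y' : StrongDual ℝ X, (y, y') ∈ T ∧ 0 < y' (x - y)}

/-- the image T^ν(x) of the quasimonotone polar -/
def polarIm (T : Set (X × StrongDual ℝ X)) (x : X) : Set (StrongDual ℝ X) :=
  {x' | (x, x') ∈ qpolar T}

/-- normal cone of C at x (no convexity or membership assumed) -/
def normalCone (C : Set X) (x : X) : Set (StrongDual ℝ X) :=
  {x' | ∀ y ∈ C, x' (y - x) ≤ 0}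

def im (T : Set (X × StrongDual ℝ X)) (x : X) : Set (StrongDual ℝ X) := {v | (x, v) ∈ T}

/-- effective domain: T(u) nonempty and ≠ {0} -/
def edom (T : Set (X × StrongDual ℝ X)) : Set X :=
  {u | (im T u).Nonempty ∧ im T u ≠ {0}}

/-- conic hull of a set in the dual -/
def coneSet (A : Set (StrongDual ℝ X)) : Set (StrongDual ℝ X) :=
  {v | ∃ t : ℝ, 0 ≤ t ∧ ∃ a ∈ A, v = t • a}

def Eset (T : Set (X × StrongDual ℝ X)) : Set X := {x | Vset T x = ∅}

/-- solution set of the Minty variational inequality for S on K -/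
def Minty (S : Set (X × StrongDual ℝ X)) (K : Set X) : Set X :=
  {x ∈ K | ∀ q ∈ S, q.1 ∈ K → q.2 (x - q.1) ≤ 0}

def AEMaxQuasiMono (T : Set (X × StrongDual ℝ X)) : Prop :=
  QuasiMono T ∧ ∀ S, QuasiMono S → (∀ x ∈ edom T, im T x ⊆ coneSet (im S x)) →
    (∀ x ∈ edom T, coneSet (im T x) = coneSet (im S x)) ∧ edom T = edom S

def hatOp (T : Set (X × StrongDual ℝ X)) : Set (X × StrongDual ℝ X) :=
  coneOp T ∪ Set.univ ×ˢ ({0} : Set (StrongDual ℝ X))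

lemma mem_coneOp_iff {T : Set (X × StrongDual ℝ X)} {p : X × StrongDual ℝ X} :
    p ∈ coneOp T ↔ p.2 ∈ coneSet (im T p.1) := Iff.rfl

lemma mem_hatOp_iff {T : Set (X × StrongDual ℝ X)} {p : X × StrongDual ℝ X} :
    p ∈ hatOp T ↔ p.2 ∈ coneSet (im T p.1) ∨ p.2 = 0 := by
  rcases p with ⟨x, v⟩
  simp [hatOp, mem_coneOp_iff, Prod.ext_iff, eq_comm]

lemma qrel_refl (p : X × StrongDual ℝ X) : qrel p p := by simp [qrel]

lemma qrel_symm {p q : X × StrongDual ℝ X} (h : qrel p q) : qrel q p := by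
  simpa [qrel, min_comm] using h

lemma qrel_zero_left (x : X) (q : X × StrongDual ℝ X) : qrel (x, (0 : StrongDual ℝ X)) q := by
  simp [qrel]

lemma qrel_smul_left {p q : X × StrongDual ℝ X} (t : ℝ) (ht : 0 ≤ t)
    (h : qrel p q) : qrel (p.1, t • p.2) q := by
  rcases min_le_iff.1 h with h1 | h1
  · refine min_le_iff.2 (Or.inl ?_)
    simpa [smul_eq_mul] using mul_nonpos_iff.2 (Or.inl ⟨ht, h1⟩)
  · exact min_le_iff.2 (Or.inr h1)

/-- any element of `hatOp T` is q-related to every element of `T`, given `p ∈ qpolar T`-style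
facts; here: `hatOp` preserves quasimonotonicity. -/
lemma hat_qrel {T : Set (X × StrongDual ℝ X)} {p q : X × StrongDual ℝ X}
    (hp : p ∈ hatOp T) (h : ∀ r ∈ T, qrel r q) : qrel p q := by
  rcases hp with hp | hp
  · obtain ⟨t, ht, v, hv, he⟩ := hp
    have : qrel ((p.1, v) : X × StrongDual ℝ X) q := h _ hv
    have := qrel_smul_left t ht this
    rcases p with ⟨x, w⟩
    simp only at he; subst he; exact this
  · rcases p with ⟨x, w⟩
    have : w = 0 := hp.2
    subst this; exact qrel_zero_left x q

lemma qrel_hat {T : Set (X × StrongDual ℝ X)} {p q : X × StrongDual ℝ X}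
    (hq : q ∈ hatOp T) (h : ∀ r ∈ T, qrel p r) : qrel p q :=
  qrel_symm (hat_qrel hq fun r hr => qrel_symm (h r hr))

lemma hat_quasiMono {T : Set (X × StrongDual ℝ X)} (hT : QuasiMono T) :
    QuasiMono (hatOp T) := by
  intro p hp q hq
  exact hat_qrel hp fun r hr => qrel_hat hq fun s hs => hT r hr s hs

lemma subset_hatOp {T : Set (X × StrongDual ℝ X)} : T ⊆ hatOp T := by
  intro p hp
  exact Or.inl ⟨1, zero_le_one, p.2, by simpa using hp, (one_smul _ _).symm⟩

lemma mem_edom_iff {T : Set (X × StrongDual ℝ X)} {x : X} :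
    x ∈ edom T ↔ ∃ v, (x, v) ∈ T ∧ v ≠ 0 := by
  constructor
  · rintro ⟨⟨v, hv⟩, hne⟩
    by_cases h : ∃ w, (x, w) ∈ T ∧ w ≠ 0
    · exact h
    · push_neg at h
      exact absurd (Set.eq_singleton_iff_unique_mem.2 ⟨by simpa using h v hv ▸ hv, fun w hw => h w hw⟩) hne
  · rintro ⟨v, hv, hvne⟩
    refine ⟨⟨v, hv⟩, fun h => hvne ?_⟩
    have : v ∈ ({0} : Set (StrongDual ℝ X)) := h ▸ hv
    simpa using this

lemma coneSet_subset_of_subset {A B : Set (StrongDual ℝ X)} (h : A ⊆ coneSet B) :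
    coneSet A ⊆ coneSet B := by
  rintro v ⟨t, ht, a, ha, rfl⟩
  obtain ⟨s, hs, b, hb, rfl⟩ := h ha
  exact ⟨t * s, mul_nonneg ht hs, b, hb, smul_smul t s b⟩

lemma self_subset_coneSet {A : Set (StrongDual ℝ X)} : A ⊆ coneSet A :=
  fun a ha => ⟨1, zero_le_one, a, ha, (one_smul _ _).symm⟩

lemma zero_mem_coneSet {A : Set (StrongDual ℝ X)} (h : A.Nonempty) : (0 : StrongDual ℝ X) ∈ coneSet A := by
  obtain ⟨a, ha⟩ := h
  exact ⟨0, le_rfl, a, ha, (zero_smul _ _).symm⟩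

lemma ne_zero_of_mem_coneSet {A : Set (StrongDual ℝ X)} {v : StrongDual ℝ X}
    (hv : v ∈ coneSet A) (hne : v ≠ 0) : ∃ a ∈ A, a ≠ 0 := by
  obtain ⟨t, ht, a, ha, rfl⟩ := hv
  exact ⟨a, ha, fun h => hne (by simp [h])⟩

/-- the hypothesis translations: hat-inclusion vs imagewise cone inclusion on edom -/
lemma hat_subset_iff {T S : Set (X × StrongDual ℝ X)} :
    hatOp T ⊆ hatOp S ↔ ∀ x ∈ edom T, im T x ⊆ coneSet (im S x) := by
  constructor
  · intro h x hx v hv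
    have hvT : ((x, v) : X × StrongDual ℝ X) ∈ hatOp T := subset_hatOp hv
    rcases mem_hatOp_iff.1 (h hvT) with h1 | h1
    · exact h1
    · -- v = 0; need im S x nonempty
      obtain ⟨w, hw, hwne⟩ := mem_edom_iff.1 hx
      have hwT : ((x, w) : X × StrongDual ℝ X) ∈ hatOp T := subset_hatOp hw
      rcases mem_hatOp_iff.1 (h hwT) with h2 | h2
      · obtain ⟨a, ha, _⟩ := ne_zero_of_mem_coneSet h2 hwne
        subst h1
        exact zero_mem_coneSet ⟨a, ha⟩
      · exact absurd h2 hwne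
  · intro h p hp
    rcases mem_hatOp_iff.1 hp with h1 | h1
    · by_cases hz : p.2 = 0
      · exact mem_hatOp_iff.2 (Or.inr hz)
      · obtain ⟨a, ha, hane⟩ := ne_zero_of_mem_coneSet h1 hz
        have hx : p.1 ∈ edom T := mem_edom_iff.2 ⟨a, ha, hane⟩
        have : im T p.1 ⊆ coneSet (im S p.1) := h _ hx
        exact mem_hatOp_iff.2 (Or.inl (coneSet_subset_of_subset this h1))
    · exact mem_hatOp_iff.2 (Or.inr h1)

/-- (i) ↔ (ii) -/
lemma aemax_iff_hat {T : Set (X × StrongDual ℝ X)} (hT : QuasiMono T) :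
    AEMaxQuasiMono T ↔
      ∀ S, QuasiMono S → hatOp T ⊆ hatOp S → hatOp T = hatOp S := by
  constructor
  · rintro ⟨-, hmax⟩ S hS hsub
    obtain ⟨hcone, hedom⟩ := hmax S hS (hat_subset_iff.1 hsub)
    refine Set.Subset.antisymm hsub ?_
    intro p hp
    rcases mem_hatOp_iff.1 hp with h1 | h1
    · by_cases hz : p.2 = 0
      · exact mem_hatOp_iff.2 (Or.inr hz)
      · obtain ⟨a, ha, hane⟩ := ne_zero_of_mem_coneSet h1 hz
        have hxS : p.1 ∈ edom S := mem_edom_iff.2 ⟨a, ha, hane⟩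
        have hxT : p.1 ∈ edom T := hedom ▸ hxS
        exact mem_hatOp_iff.2 (Or.inl ((hcone _ hxT) ▸ h1))
    · exact mem_hatOp_iff.2 (Or.inr h1)
  · intro h
    refine ⟨hT, fun S hS hsub => ?_⟩
    have heq : hatOp T = hatOp S := h S hS (hat_subset_iff.2 hsub)
    constructor
    · intro x hx
      refine Set.Subset.antisymm (coneSet_subset_of_subset (hsub x hx)) ?_
      rintro v ⟨t, ht, a, ha, rfl⟩
      by_cases haz : a = 0
      · subst haz
        obtain ⟨w, hw⟩ := hx.1
        simpa using zero_mem_coneSet ⟨w, hw⟩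
      · have : ((x, a) : X × StrongDual ℝ X) ∈ hatOp T := heq ▸ subset_hatOp ha
        rcases mem_hatOp_iff.1 this with h1 | h1
        · exact coneSet_subset_of_subset (fun b hb => hb) ⟨t, ht, a, h1, rfl⟩
        · exact absurd h1 haz
    · ext x
      simp only [mem_edom_iff]
      constructor
      · rintro ⟨v, hv, hvne⟩
        have : ((x, v) : X × StrongDual ℝ X) ∈ hatOp S := heq ▸ subset_hatOp hv
        rcases mem_hatOp_iff.1 this with h1 | h1
        · obtain ⟨a, ha, hane⟩ := ne_zero_of_mem_coneSet h1 hvne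
          exact ⟨a, ha, hane⟩
        · exact absurd h1 hvne
      · rintro ⟨v, hv, hvne⟩
        have : ((x, v) : X × StrongDual ℝ X) ∈ hatOp T := heq.symm ▸ subset_hatOp hv
        rcases mem_hatOp_iff.1 this with h1 | h1
        · obtain ⟨a, ha, hane⟩ := ne_zero_of_mem_coneSet h1 hvne
          exact ⟨a, ha, hane⟩
        · exact absurd h1 hvne

/-- (ii) ↔ (iii) -/
lemma hat_iff_max {T : Set (X × StrongDual ℝ X)} (hT : QuasiMono T) :
    (∀ S, QuasiMono S → hatOp T ⊆ hatOp S → hatOp T = hatOp S) ↔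
      MaxQuasiMono (hatOp T) := by
  constructor
  · intro h
    refine ⟨hat_quasiMono hT, fun S hS hsub => ?_⟩
    have : hatOp T = hatOp S := h S hS (hsub.trans subset_hatOp)
    refine Set.Subset.antisymm ?_ hsub
    intro p hp
    exact this ▸ subset_hatOp hp
  · rintro ⟨-, hmax⟩ S hS hsub
    exact (hmax (hatOp S) (hat_quasiMono hS) hsub).symm

lemma qpolar_anti {T S : Set (X × StrongDual ℝ X)} (h : T ⊆ S) : qpolar S ⊆ qpolar T :=
  fun p hp q hq => hp q (h hq)

lemma hat_subset_qpolar {T : Set (X × StrongDual ℝ X)} (hT : QuasiMono T) :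
    hatOp T ⊆ qpolar T :=
  fun p hp q hq => hat_qrel hp fun r hr => hT r hr q hq

lemma mem_qpolar_hat {T : Set (X × StrongDual ℝ X)} {p : X × StrongDual ℝ X}
    (hp : p ∈ qpolar T) : ∀ q ∈ hatOp T, qrel p q :=
  fun q hq => qrel_hat hq fun r hr => hp r hr

/-- (iii) ↔ (iv) -/
lemma max_iff_qpolar {T : Set (X × StrongDual ℝ X)} (hT : QuasiMono T) :
    MaxQuasiMono (hatOp T) ↔ hatOp T = qpolar T := by
  constructor
  · rintro ⟨-, hmax⟩
    refine Set.Subset.antisymm (hat_subset_qpolar hT) ?_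
    intro p hp
    have hqm : QuasiMono (insert p (hatOp T)) := by
      intro a ha b hb
      rcases ha with rfl | ha
      · rcases hb with rfl | hb
        · exact qrel_refl _
        · exact mem_qpolar_hat hp _ hb
      · rcases hb with rfl | hb
        · exact qrel_symm (mem_qpolar_hat hp _ ha)
        · exact hat_quasiMono hT _ ha _ hb
    have := hmax _ hqm (Set.subset_insert _ _)
    exact this ▸ Set.mem_insert _ _
  · intro h
    refine ⟨hat_quasiMono hT, fun S hS hsub => ?_⟩
    refine Set.Subset.antisymm ?_ hsub
    intro p hp
    have : p ∈ qpolar S := fun q hq => hS p hp q hq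
    have : p ∈ qpolar T := qpolar_anti (subset_hatOp.trans hsub) this
    exact h ▸ this

theorem stmt16 [CompleteSpace X] (T : Set (X × StrongDual ℝ X)) (hT : QuasiMono T) :
    (AEMaxQuasiMono T ↔
      ∀ S : Set (X × StrongDual ℝ X), QuasiMono S →
        coneOp T ∪ Set.univ ×ˢ ({0} : Set (StrongDual ℝ X)) ⊆
          coneOp S ∪ Set.univ ×ˢ ({0} : Set (StrongDual ℝ X)) →
        coneOp T ∪ Set.univ ×ˢ ({0} : Set (StrongDual ℝ X)) =
          coneOp S ∪ Set.univ ×ˢ ({0} : Set (StrongDual ℝ X))) ∧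
    (AEMaxQuasiMono T ↔
      MaxQuasiMono (coneOp T ∪ Set.univ ×ˢ ({0} : Set (StrongDual ℝ X)))) ∧
    (AEMaxQuasiMono T ↔
      coneOp T ∪ Set.univ ×ˢ ({0} : Set (StrongDual ℝ X)) = qpolar T) := by
  refine ⟨aemax_iff_hat hT, ?_, ?_⟩
  · exact (aemax_iff_hat hT).trans (hat_iff_max hT)
  · exact (aemax_iff_hat hT).trans ((hat_iff_max hT).trans (max_iff_qpolar hT))
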